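/- In ℝ² let Γ₁ = {(x, 0) : x > 0} and Γ₂ = {(x, 0) : x < 0}. Then Γ₁ and Γ₂ are closed cones in ℝ²\{0}, and for every pair of open cones W₁, W₂ in ℝ²\{0} with Γ₁ ⊆ W₁ and Γ₂ ⊆ W₂ one has W₁ + W₂ = ℝ². In particular, no proper open conic neighborhood W of Γ₁ + Γ₂ admits open conic neighborhoods W₁ ⊇ Γ₁, W₂ ⊇ Γ₂ with W₁ + W₂ ⊆ W. -/
import Mathlib


open Pointwise

lemma sumKey (W₁ W₂ : Set (ℝ × ℝ)) (hO1 : IsOpen W₁)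
    (hc1 : ∀ ξ ∈ W₁, ∀ t : ℝ, 0 < t → t • ξ ∈ W₁)
    (hO2 : IsOpen W₂)
    (hc2 : ∀ ξ ∈ W₂, ∀ t : ℝ, 0 < t → t • ξ ∈ W₂)
    (h1 : ((1:ℝ), (0:ℝ)) ∈ W₁) (h2 : ((-1:ℝ), (0:ℝ)) ∈ W₂) :
    W₁ + W₂ = Set.univ := by
  rcases Metric.isOpen_iff.1 hO1 _ h1 with ⟨ε₁, hε₁, hb1⟩
  rcases Metric.isOpen_iff.1 hO2 _ h2 with ⟨ε₂, hε₂, hb2⟩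
  set ε := min ε₁ ε₂ with hεdef
  have hεpos : 0 < ε := lt_min hε₁ hε₂
  ext v
  simp only [Set.mem_univ, iff_true]
  obtain ⟨x, y⟩ := v
  set R : ℝ := |x| + |y| / ε + 1 with hR
  have hyε : 0 ≤ |y| / ε := div_nonneg (abs_nonneg _) hεpos.le
  have hax : 0 ≤ |x| := abs_nonneg x
  have hRpos : 0 < R := by positivity
  have hRx : |y| / ε + 1 ≤ R - x := by
    have := le_abs_self x; simp only [hR]; linarith
  have hRxpos : 0 < R - x := lt_of_lt_of_le (by linarith) hRx
  have key : ∀ c : ℝ, |y| / ε + 1 ≤ c → |y / (2 * c)| < ε := by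
    intro c hc
    have hcpos : 0 < c := by linarith
    rw [abs_div, abs_of_pos (by linarith : (0:ℝ) < 2 * c), div_lt_iff₀ (by linarith)]
    have h2 : |y| ≤ ε * c - ε := by
      have := (div_le_iff₀ hεpos).1 (by linarith : |y| / ε ≤ c - 1)
      linarith
    nlinarith
  have mem1 : ((1:ℝ), y / (2 * R)) ∈ W₁ := by
    apply hb1
    rw [Metric.mem_ball, Prod.dist_eq]
    have h := lt_of_lt_of_le (key R (by linarith)) (min_le_left ε₁ ε₂)
    simp only [dist_self, Real.dist_eq, sub_zero]
    rw [max_eq_right (abs_nonneg _)]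
    exact h
  have mem2 : ((-1:ℝ), y / (2 * (R - x))) ∈ W₂ := by
    apply hb2
    rw [Metric.mem_ball, Prod.dist_eq]
    have h := lt_of_lt_of_le (key (R - x) hRx) (min_le_right ε₁ ε₂)
    simp only [dist_self, Real.dist_eq, sub_zero]
    rw [max_eq_right (abs_nonneg _)]
    exact h
  have ha : R • ((1:ℝ), y / (2 * R)) ∈ W₁ := hc1 _ mem1 R hRpos
  have hb : (R - x) • ((-1:ℝ), y / (2 * (R - x))) ∈ W₂ := hc2 _ mem2 (R - x) hRxpos
  refine Set.mem_add.2 ⟨_, ha, _, hb, ?_⟩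
  have hR0 : R ≠ 0 := ne_of_gt hRpos
  have hRx0 : R - x ≠ 0 := ne_of_gt hRxpos
  ext <;> simp [Prod.smul_mk] <;> field_simp <;> ring

/--
In `ℝ²` let `Γ₁ = {(x,0) : x > 0}` and `Γ₂ = {(x,0) : x < 0}`. Then
`Γ₁`, `Γ₂` are closed cones in `ℝ² \ {0}`, and for every pair of open cones `W₁`, `W₂`
in `ℝ² \ {0}` with `Γ₁ ⊆ W₁`, `Γ₂ ⊆ W₂` one has `W₁ + W₂ = ℝ²`. In particular, no
proper open conic neighborhood `W` of `Γ₁ + Γ₂` admits open conic neighborhoods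
`W₁ ⊇ Γ₁`, `W₂ ⊇ Γ₂` with `W₁ + W₂ ⊆ W`.
-/
theorem stmt4
    (Γ₁ Γ₂ : Set (ℝ × ℝ))
    (hΓ₁ : Γ₁ = {p | 0 < p.1 ∧ p.2 = 0})
    (hΓ₂ : Γ₂ = {p | p.1 < 0 ∧ p.2 = 0}) :
    -- Γ₁ and Γ₂ are closed cones in ℝ² \ {0}:
    ((0 : ℝ × ℝ) ∉ Γ₁ ∧ (0 : ℝ × ℝ) ∉ Γ₂ ∧
      (∀ ξ ∈ Γ₁, ∀ t : ℝ, 0 < t → t • ξ ∈ Γ₁) ∧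
      (∀ ξ ∈ Γ₂, ∀ t : ℝ, 0 < t → t • ξ ∈ Γ₂) ∧
      closure Γ₁ \ {0} ⊆ Γ₁ ∧ closure Γ₂ \ {0} ⊆ Γ₂) ∧
    -- every pair of open conic neighborhoods sums up to all of ℝ²:
    (∀ W₁ W₂ : Set (ℝ × ℝ),
      IsOpen W₁ → (0 : ℝ × ℝ) ∉ W₁ → (∀ ξ ∈ W₁, ∀ t : ℝ, 0 < t → t • ξ ∈ W₁) →
      IsOpen W₂ → (0 : ℝ × ℝ) ∉ W₂ → (∀ ξ ∈ W₂, ∀ t : ℝ, 0 < t → t • ξ ∈ W₂) →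
      Γ₁ ⊆ W₁ → Γ₂ ⊆ W₂ → W₁ + W₂ = Set.univ) ∧
    -- in particular, no proper open conic neighborhood W of Γ₁ + Γ₂ admits
    -- open conic neighborhoods W₁ ⊇ Γ₁, W₂ ⊇ Γ₂ with W₁ + W₂ ⊆ W:
    (∀ W : Set (ℝ × ℝ),
      IsOpen W → (0 : ℝ × ℝ) ∉ W → (∀ ξ ∈ W, ∀ t : ℝ, 0 < t → t • ξ ∈ W) →
      Γ₁ + Γ₂ ⊆ W →
      ¬ ∃ W₁ W₂ : Set (ℝ × ℝ),
        IsOpen W₁ ∧ (0 : ℝ × ℝ) ∉ W₁ ∧ (∀ ξ ∈ W₁, ∀ t : ℝ, 0 < t → t • ξ ∈ W₁) ∧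
        IsOpen W₂ ∧ (0 : ℝ × ℝ) ∉ W₂ ∧ (∀ ξ ∈ W₂, ∀ t : ℝ, 0 < t → t • ξ ∈ W₂) ∧
        Γ₁ ⊆ W₁ ∧ Γ₂ ⊆ W₂ ∧ W₁ + W₂ ⊆ W) := by
  subst hΓ₁ hΓ₂
  have hmem1 : ((1:ℝ), (0:ℝ)) ∈ {p : ℝ × ℝ | 0 < p.1 ∧ p.2 = 0} := ⟨one_pos, rfl⟩
  have hmem2 : ((-1:ℝ), (0:ℝ)) ∈ {p : ℝ × ℝ | p.1 < 0 ∧ p.2 = 0} := ⟨by norm_num, rfl⟩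
  refine ⟨⟨?_, ?_, ?_, ?_, ?_, ?_⟩, ?_, ?_⟩
  · simp
  · simp
  · rintro ⟨a, b⟩ ⟨ha, hb⟩ t ht
    exact ⟨mul_pos ht ha, by simp; exact Or.inr hb⟩
  · rintro ⟨a, b⟩ ⟨ha, hb⟩ t ht
    exact ⟨mul_neg_of_pos_of_neg ht ha, by simp; exact Or.inr hb⟩
  · have hcl : closure {p : ℝ × ℝ | 0 < p.1 ∧ p.2 = 0} ⊆ {p : ℝ × ℝ | 0 ≤ p.1 ∧ p.2 = 0} :=
      closure_minimal (fun p hp => ⟨hp.1.le, hp.2⟩)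
        ((isClosed_le continuous_const continuous_fst).inter
          (isClosed_eq continuous_snd continuous_const))
    rintro p ⟨hp, hp0⟩
    obtain ⟨h1, h2⟩ := hcl hp
    refine ⟨lt_of_le_of_ne h1 ?_, h2⟩
    intro h
    exact hp0 (by simp only [Set.mem_singleton_iff]; exact Prod.ext h.symm h2)
  · have hcl : closure {p : ℝ × ℝ | p.1 < 0 ∧ p.2 = 0} ⊆ {p : ℝ × ℝ | p.1 ≤ 0 ∧ p.2 = 0} :=
      closure_minimal (fun p hp => ⟨hp.1.le, hp.2⟩)
        ((isClosed_le continuous_fst continuous_const).inter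
          (isClosed_eq continuous_snd continuous_const))
    rintro p ⟨hp, hp0⟩
    obtain ⟨h1, h2⟩ := hcl hp
    refine ⟨lt_of_le_of_ne h1 ?_, h2⟩
    intro h
    exact hp0 (by simp only [Set.mem_singleton_iff]; exact Prod.ext h h2)
  · intro W₁ W₂ hO1 _ hc1 hO2 _ hc2 hs1 hs2
    exact sumKey W₁ W₂ hO1 hc1 hO2 hc2 (hs1 hmem1) (hs2 hmem2)
  · rintro W _ hW0 _ _ ⟨W₁, W₂, hO1, _, hc1, hO2, _, hc2, hs1, hs2, hsum⟩
    have huniv := sumKey W₁ W₂ hO1 hc1 hO2 hc2 (hs1 hmem1) (hs2 hmem2)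
    exact hW0 (hsum (huniv ▸ Set.mem_univ (0 : ℝ × ℝ)))
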